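/- Let (Λ, k), (Θ, u) be basis elements with u < k, λ_u ≥ 1, and Γ = Λ − e_u + Θ. If lev_i(Λ, k) ≤ i and lev_j(Θ, u) ≤ j for some i, j ≥ −1, then WD(Γ, k) ≤ min(WD(Λ, k), WD(Θ, u)), with equality if and only if (Θ, u) is the element ∂_1, i.e., Θ = 0 and u = 1. -/

import Mathlib

/-- Weight of a partition (finitely supported sequence of multiplicities). -/
def wt (Λ : ℕ →₀ ℕ) : ℕ := Λ.sum fun m c => m * c

/-- Degree (number of parts, with multiplicity) of a partition. -/
def deg (Λ : ℕ →₀ ℕ) : ℕ := Λ.sum fun _ c => c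

/-- Basis element of the integral Lie ring of partitions: a pair (Λ, k) with
1 ≤ k ≤ n and all parts of Λ in {1,…,k-1}. -/
def IsBasisElt (n : ℕ) (Λ : ℕ →₀ ℕ) (k : ℕ) : Prop :=
  1 ≤ k ∧ k ≤ n ∧ Λ 0 = 0 ∧ ∀ m, k ≤ m → Λ m = 0

/-- The weight-degree function. -/
def WD (n : ℕ) (Λ : ℕ →₀ ℕ) (k : ℕ) : ℤ :=
  (wt Λ : ℤ) - (deg Λ : ℤ) + (n : ℤ) - (k : ℤ)

/-- h_i = ⌊(i-1)/(n-1)⌋ + 1. -/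
def hh (n : ℕ) (i : ℤ) : ℤ := (i - 1).fdiv ((n : ℤ) - 1) + 1

/-- r_i = i - (h_i - 1)(n-1). -/
def rr (n : ℕ) (i : ℤ) : ℤ := i - (hh n i - 1) * ((n : ℤ) - 1)

/-- The i-th level function lev_i(Λ,k) = h_i·WD(Λ,k) + deg(Λ) - 1. -/
def lev (n : ℕ) (i : ℤ) (Λ : ℕ →₀ ℕ) (k : ℕ) : ℤ :=
  hh n i * WD n Λ k + (deg Λ : ℤ) - 1

/-- N_i = set of basis elements with lev_j ≤ j for some -1 ≤ j ≤ i. -/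
def Nset (n : ℕ) (i : ℤ) : Set ((ℕ →₀ ℕ) × ℕ) :=
  {p | IsBasisElt n p.1 p.2 ∧ ∃ j : ℤ, -1 ≤ j ∧ j ≤ i ∧ lev n j p.1 p.2 ≤ j}

/-- L_i = set of basis elements for which i is the least index j ≥ -1 with lev_j = j. -/
def Lset (n : ℕ) (i : ℤ) : Set ((ℕ →₀ ℕ) × ℕ) :=
  {p | IsBasisElt n p.1 p.2 ∧ lev n i p.1 p.2 = i ∧
    ∀ j : ℤ, -1 ≤ j → lev n j p.1 p.2 = j → i ≤ j}

/-- The partition function p(s). -/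
def pfun (s : ℕ) : ℕ := Fintype.card (Nat.Partition s)

/-- b_m = Σ_{s=0}^m p(s). -/
def bnat (m : ℕ) : ℕ := ∑ s ∈ Finset.range (m + 1), pfun s

/-- c_m = Σ_{s=0}^m b_s. -/
def cnat (m : ℕ) : ℕ := ∑ s ∈ Finset.range (m + 1), bnat s

/-- b extended to ℤ, with b_m = 0 for m < 0. -/
def bint (m : ℤ) : ℕ := if m < 0 then 0 else bnat m.toNat

/-- The period map per(Λ,k) = (Λ + (n-1-WD(Λ,k))·e₁, k). -/
noncomputable def per (n : ℕ) (p : (ℕ →₀ ℕ) × ℕ) : (ℕ →₀ ℕ) × ℕ :=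
  (p.1 + Finsupp.single 1 (((n : ℤ) - 1 - WD n p.1 p.2).toNat), p.2)


lemma wt_add' (A B : ℕ →₀ ℕ) : wt (A + B) = wt A + wt B := by
  unfold wt
  exact Finsupp.sum_add_index' (fun m => by ring) (fun m c d => by ring)

lemma deg_add' (A B : ℕ →₀ ℕ) : deg (A + B) = deg A + deg B := by
  unfold deg
  exact Finsupp.sum_add_index' (fun m => rfl) (fun m c d => rfl)

lemma wt_single' (u : ℕ) : wt (Finsupp.single u 1) = u := by
  unfold wt
  rw [Finsupp.sum_single_index] <;> ring

lemma deg_single' (u : ℕ) : deg (Finsupp.single u 1) = 1 := by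
  simp [deg, Finsupp.sum_single_index]

lemma deg_zero' {Λ : ℕ →₀ ℕ} (h : deg Λ = 0) : Λ = 0 := by
  ext a
  by_cases ha : a ∈ Λ.support
  · unfold deg Finsupp.sum at h
    exact Finset.sum_eq_zero_iff.mp h a ha
  · simpa using Finsupp.notMem_support_iff.mp ha

lemma wt_deg_le' (Λ : ℕ →₀ ℕ) (k : ℕ) (hk : ∀ m, k ≤ m → Λ m = 0) :
    wt Λ + deg Λ ≤ k * deg Λ := by
  unfold wt deg Finsupp.sum
  rw [← Finset.sum_add_distrib, Finset.mul_sum]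
  apply Finset.sum_le_sum
  intro a ha
  have hak : a < k := by
    by_contra h
    exact (Finsupp.mem_support_iff.mp ha) (hk a (le_of_not_gt h))
  calc a * Λ a + Λ a = (a + 1) * Λ a := by ring
    _ ≤ k * Λ a := Nat.mul_le_mul_right _ hak

lemma WD_bound' (n : ℕ) (hn : 3 ≤ n) (Λ : ℕ →₀ ℕ) (k : ℕ)
    (hB : IsBasisElt n Λ k) (j : ℤ) (hj : -1 ≤ j) (hlev : lev n j Λ k ≤ j) :
    WD n Λ k ≤ (n : ℤ) - 1 ∧ ((n : ℤ) - 1 ≤ WD n Λ k → Λ = 0 ∧ k = 1) := by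
  obtain ⟨hk1, hkn, h0, hparts⟩ := hB
  have hn3 : (3 : ℤ) ≤ (n : ℤ) := by exact_mod_cast hn
  have hk1' : (1 : ℤ) ≤ (k : ℤ) := by exact_mod_cast hk1
  set b : ℤ := (n : ℤ) - 1 with hbdef
  set q : ℤ := (j - 1).fdiv b with hqdef
  have hbpos : 0 < b := by omega
  have hmod1 : 0 ≤ (j - 1).fmod b := Int.fmod_nonneg_of_pos (j - 1) hbpos
  have hmod2 : (j - 1).fmod b < b := Int.fmod_lt_of_pos (j - 1) hbpos
  have hfmod : (j - 1).fmod b + b * q = j - 1 := by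
    rw [hqdef]; exact Int.fmod_add_mul_fdiv (j - 1) b
  have hfd : b * q ≤ j - 1 := by omega
  have hfd2 : j - 1 < b * (q + 1) := by nlinarith
  have hq : -1 ≤ q := by nlinarith
  have hh_eq : hh n j = q + 1 := rfl
  have hjub : j ≤ (q + 1) * b := by nlinarith
  have hlev' : (q + 1) * WD n Λ k + (deg Λ : ℤ) - 1 ≤ j := by
    rw [lev, hh_eq] at hlev; exact hlev
  have hkey0 : (q + 1) * (WD n Λ k - b) ≤ 1 - (deg Λ : ℤ) := by nlinarith
  have hwd : WD n Λ k = (wt Λ : ℤ) - (deg Λ : ℤ) + (n : ℤ) - (k : ℤ) := rfl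
  have hw : (wt Λ : ℤ) + (deg Λ : ℤ) ≤ (k : ℤ) * (deg Λ : ℤ) := by
    exact_mod_cast wt_deg_le' Λ k hparts
  have hkey : b ≤ WD n Λ k → Λ = 0 ∧ k = 1 := by
    intro hge
    have h1 : (0 : ℤ) ≤ (q + 1) * (WD n Λ k - b) :=
      mul_nonneg (by omega) (by omega)
    have hdeg1 : (deg Λ : ℤ) ≤ 1 := by omega
    have hdn : deg Λ = 0 ∨ deg Λ = 1 := by omega
    rcases hdn with hd | hd
    · have hΛ0 : Λ = 0 := deg_zero' hd
      refine ⟨hΛ0, ?_⟩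
      have hwt0 : wt Λ = 0 := by rw [hΛ0]; simp [wt]
      rw [hwd, hwt0, hd] at hge
      push_cast at hge
      omega
    · exfalso
      rw [hd] at hw hwd
      push_cast at hw hwd
      omega
  constructor
  · by_contra hlt
    push_neg at hlt
    obtain ⟨hΛ0, hk1''⟩ := hkey (by omega)
    have hwt0 : wt Λ = 0 := by rw [hΛ0]; simp [wt]
    have hdeg0 : deg Λ = 0 := by rw [hΛ0]; simp [deg]
    rw [hwd, hwt0, hdeg0, hk1''] at hlt
    push_cast at hlt
    omega
  · exact hkey

theorem stmt7 (n : ℕ) (hn : 3 ≤ n) (Λ Θ : ℕ →₀ ℕ) (k u : ℕ)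
    (hΛ : IsBasisElt n Λ k) (hΘ : IsBasisElt n Θ u) (huk : u < k) (hu : 1 ≤ Λ u)
    (i j : ℤ) (hi : -1 ≤ i) (hj : -1 ≤ j)
    (hlevΛ : lev n i Λ k ≤ i) (hlevΘ : lev n j Θ u ≤ j) :
    WD n (Λ + Θ - Finsupp.single u 1) k ≤ min (WD n Λ k) (WD n Θ u) ∧
    (WD n (Λ + Θ - Finsupp.single u 1) k = min (WD n Λ k) (WD n Θ u) ↔
      Θ = 0 ∧ u = 1) := by
  have hSle : Finsupp.single u 1 ≤ Λ + Θ := by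
    rw [Finsupp.le_def]
    intro a
    rcases eq_or_ne a u with rfl | hne
    · simp only [Finsupp.single_eq_same, Finsupp.add_apply]
      omega
    · simp [Finsupp.single_apply, hne.symm]
  have hΓ : (Λ + Θ - Finsupp.single u 1) + Finsupp.single u 1 = Λ + Θ :=
    tsub_add_cancel_of_le hSle
  have hwt : wt (Λ + Θ - Finsupp.single u 1) + u = wt Λ + wt Θ := by
    have h := congrArg wt hΓ
    rw [wt_add', wt_add', wt_single'] at h
    omega
  have hdeg : deg (Λ + Θ - Finsupp.single u 1) + 1 = deg Λ + deg Θ := by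
    have h := congrArg deg hΓ
    rw [deg_add', deg_add', deg_single'] at h
    omega
  have hwt' : (wt (Λ + Θ - Finsupp.single u 1) : ℤ) + (u : ℤ) = (wt Λ : ℤ) + (wt Θ : ℤ) := by
    exact_mod_cast hwt
  have hdeg' : (deg (Λ + Θ - Finsupp.single u 1) : ℤ) + 1 = (deg Λ : ℤ) + (deg Θ : ℤ) := by
    exact_mod_cast hdeg
  have hWDG : WD n (Λ + Θ - Finsupp.single u 1) k = WD n Λ k + WD n Θ u - ((n : ℤ) - 1) := by
    unfold WD
    omega
  obtain ⟨haLe, haEq⟩ := WD_bound' n hn Λ k hΛ i hi hlevΛ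
  obtain ⟨hbLe, hbEq⟩ := WD_bound' n hn Θ u hΘ j hj hlevΘ
  have hu1 : 1 ≤ u := hΘ.1
  have hane : WD n Λ k < (n : ℤ) - 1 := by
    rcases lt_or_ge (WD n Λ k) ((n : ℤ) - 1) with h | h
    · exact h
    · obtain ⟨_, hk1⟩ := haEq h
      omega
  rw [hWDG]
  constructor
  · rw [le_min_iff]
    constructor <;> omega
  · constructor
    · intro heq
      have hb : ((n : ℤ) - 1) ≤ WD n Θ u := by
        rcases le_total (WD n Λ k) (WD n Θ u) with hab | hab
        · rw [min_eq_left hab] at heq; omega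
        · rw [min_eq_right hab] at heq; omega
      exact (hbEq hb).imp_left id
    · rintro ⟨rfl, rfl⟩
      have hb : WD n 0 1 = (n : ℤ) - 1 := by
        unfold WD
        simp [wt, deg]
      rw [hb, min_eq_left (by omega)]
      ring
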